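/- Under the hypotheses of the rank-one Bruhat decomposition, the normalizer in G of any nontrivial subgroup V of the unipotent radical N of a minimal parabolic P is contained in P. -/

import Mathlib

/-- Under the hypotheses of the rank-one Bruhat decomposition
(`G = P ∪ PwP`, `N` the unipotent radical of the minimal parabolic `P`,
`wPw⁻¹ ∩ P` containing no nontrivial unipotent element), the normalizer in `G`
of any nontrivial subgroup `V` of `N` is contained in `P`. -/
theorem stmt_7 {G : Type*} [Group G] (P N V : Subgroup G) (w : G)
    (unip : G → Prop)
    (hVN : V ≤ N) (hNP : N ≤ P) (hVnt : V ≠ ⊥)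
    (hVunip : ∀ v ∈ V, v ≠ 1 → unip v)
    (hconj : ∀ (g x : G), unip x → unip (g * x * g⁻¹))
    (hBruhat : ∀ g : G, g ∈ P ∨ ∃ p₁ ∈ P, ∃ p₂ ∈ P, g = p₁ * w * p₂)
    (hMA : ∀ x : G, unip x → x ∈ P → w⁻¹ * x * w ∈ P → x = 1) :
    Subgroup.normalizer (V : Set G) ≤ P := by
  intro g hg
  rcases hBruhat g with h | ⟨p₁, hp₁, p₂, hp₂, hge⟩
  · exact h
  exfalso
  obtain ⟨a, ha⟩ := Subgroup.ne_bot_iff_exists_ne_one.mp hVnt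
  have hvV : (a : G) ∈ V := a.2
  have hv1 : (a : G) ≠ 1 := fun h => ha (Subtype.ext h)
  have hxP : p₂ * a * p₂⁻¹ ∈ P := P.mul_mem (P.mul_mem hp₂ (hNP (hVN hvV))) (P.inv_mem hp₂)
  have hxu : unip (p₂ * a * p₂⁻¹) := hconj p₂ a (hVunip a hvV hv1)
  have hgv : g * a * g⁻¹ ∈ V := (hg a).mp hvV
  have hx'P : w * (p₂ * a * p₂⁻¹) * w⁻¹ ∈ P := by
    have h1 : w * (p₂ * a * p₂⁻¹) * w⁻¹ = p₁⁻¹ * (g * a * g⁻¹) * p₁ := by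
      rw [hge]; group
    rw [h1]
    exact P.mul_mem (P.mul_mem (P.inv_mem hp₁) (hNP (hVN hgv))) hp₁
  have hx'u : unip (w * (p₂ * a * p₂⁻¹) * w⁻¹) := hconj w _ hxu
  have hx'back : w⁻¹ * (w * (p₂ * a * p₂⁻¹) * w⁻¹) * w ∈ P := by
    have h2 : w⁻¹ * (w * (p₂ * a * p₂⁻¹) * w⁻¹) * w = p₂ * a * p₂⁻¹ := by group
    rw [h2]; exact hxP
  have h3 := hMA _ hx'u hx'P hx'back
  have hx1 : p₂ * (a : G) * p₂⁻¹ = 1 := by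
    have h4 := congrArg (fun y => w⁻¹ * y * w) h3
    simp only [mul_one] at h4
    have h2 : w⁻¹ * (w * (p₂ * a * p₂⁻¹) * w⁻¹) * w = p₂ * a * p₂⁻¹ := by group
    rw [h2] at h4
    simpa using h4
  apply hv1
  have h5 := congrArg (fun y => p₂⁻¹ * y * p₂) hx1
  simp only [mul_one] at h5
  have h6 : p₂⁻¹ * (p₂ * a * p₂⁻¹) * p₂ = a := by group
  rw [h6] at h5
  simpa using h5
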